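/- Let D : X → Y be a bounded linear operator between Banach spaces, and let K : X → Z be a compact linear operator into a Banach space Z, such that there exists c > 0 with ‖x‖_X ≤ c(‖Kx‖_Z + ‖Dx‖_Y) for all x ∈ X. Then ker D is finite-dimensional and the range of D is closed (i.e. D is semi-Fredholm). -/

import Mathlib

open Filter Topology

section aux
variable {X Y Z : Type*}
    [NormedAddCommGroup X] [NormedSpace ℝ X] [CompleteSpace X]
    [NormedAddCommGroup Y] [NormedSpace ℝ Y] [CompleteSpace Y]
    [NormedAddCommGroup Z] [NormedSpace ℝ Z] [CompleteSpace Z]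

set_option linter.unusedSectionVars false in
/-- Core compactness lemma: a bounded sequence whose `D`-images form a Cauchy
sequence has a convergent subsequence. -/
lemma stmt6_aux (D : X →L[ℝ] Y) (K : X →L[ℝ] Z) (hK : IsCompactOperator K)
    (c : ℝ) (hc : 0 < c) (h : ∀ x : X, ‖x‖ ≤ c * (‖K x‖ + ‖D x‖))
    (z : ℕ → X) (hz : ∀ n, ‖z n‖ ≤ 2) (hD : CauchySeq fun n => D (z n)) :
    ∃ (φ : ℕ → ℕ) (x : X), StrictMono φ ∧ Tendsto (z ∘ φ) atTop (𝓝 x) := by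
  obtain ⟨M, hMc, hMs⟩ := hK.image_closedBall_subset_compact (𝕜₁ := ℝ) 2
  have hmem : ∀ n, K (z n) ∈ M := fun n =>
    hMs ⟨z n, by simpa [Metric.mem_closedBall, dist_eq_norm] using hz n, rfl⟩
  obtain ⟨w, -, φ, hφ, hKlim⟩ := hMc.tendsto_subseq hmem
  have hKc : CauchySeq fun n => K (z (φ n)) := hKlim.cauchySeq
  have hDc : CauchySeq fun n => D (z (φ n)) := hD.comp_tendsto hφ.tendsto_atTop
  have hcauchy : CauchySeq (z ∘ φ) := by
    rw [Metric.cauchySeq_iff] at *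
    intro ε hε
    have hδ : 0 < ε / (2 * c) := by positivity
    obtain ⟨N₁, hN₁⟩ := hKc _ hδ
    obtain ⟨N₂, hN₂⟩ := hDc _ hδ
    refine ⟨max N₁ N₂, fun m hm n hn => ?_⟩
    have h1 := hN₁ m (le_trans (le_max_left _ _) hm) n (le_trans (le_max_left _ _) hn)
    have h2 := hN₂ m (le_trans (le_max_right _ _) hm) n (le_trans (le_max_right _ _) hn)
    rw [dist_eq_norm] at h1 h2 ⊢
    have := h (z (φ m) - z (φ n))
    rw [map_sub, map_sub] at this
    calc ‖z (φ m) - z (φ n)‖ ≤ c * (‖K (z (φ m)) - K (z (φ n))‖ + ‖D (z (φ m)) - D (z (φ n))‖) :=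
          this
      _ < c * (ε / (2 * c) + ε / (2 * c)) := by
          apply mul_lt_mul_of_pos_left _ hc
          exact add_lt_add h1 h2
      _ = ε := by field_simp; ring
  obtain ⟨x, hx⟩ := cauchySeq_tendsto_of_complete hcauchy
  exact ⟨φ, x, hφ, hx⟩

end aux

/-- the abstract semi-Fredholm criterion.  If `D : X → Y` is
bounded, `K : X → Z` is compact, and `‖x‖ ≤ c(‖Kx‖ + ‖Dx‖)` for all `x`, then
`ker D` is finite-dimensional and `range D` is closed. -/
theorem stmt6 {X Y Z : Type*}
    [NormedAddCommGroup X] [NormedSpace ℝ X] [CompleteSpace X]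
    [NormedAddCommGroup Y] [NormedSpace ℝ Y] [CompleteSpace Y]
    [NormedAddCommGroup Z] [NormedSpace ℝ Z] [CompleteSpace Z]
    (D : X →L[ℝ] Y) (K : X →L[ℝ] Z) (hK : IsCompactOperator K)
    (c : ℝ) (hc : 0 < c) (h : ∀ x : X, ‖x‖ ≤ c * (‖K x‖ + ‖D x‖)) :
    FiniteDimensional ℝ (LinearMap.ker (D : X →ₗ[ℝ] Y)) ∧ IsClosed (LinearMap.range (D : X →ₗ[ℝ] Y) : Set Y) := by
  constructor
  · -- finite dimensionality of the kernel via Riesz: the closed unit ball is compact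
    have hcomp : IsCompact (Metric.closedBall (0 : LinearMap.ker (D : X →ₗ[ℝ] Y)) 1) := by
      apply IsSeqCompact.isCompact
      intro u hu
      have hz : ∀ n, ‖((u n : X))‖ ≤ 2 := by
        intro n
        have := hu n
        rw [Metric.mem_closedBall, dist_zero_right] at this
        calc ‖((u n : X))‖ = ‖u n‖ := rfl
          _ ≤ 1 := this
          _ ≤ 2 := by norm_num
      have hDz : ∀ n, D ((u n : X)) = 0 := fun n => (u n).2
      have hDc : CauchySeq fun n => D ((u n : X)) := by
        simp only [hDz]; exact cauchySeq_const 0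
      obtain ⟨φ, x, hφ, hx⟩ := stmt6_aux D K hK c hc h (fun n => (u n : X)) hz hDc
      have hxker : x ∈ LinearMap.ker (D : X →ₗ[ℝ] Y) := by
        have h1 : Tendsto (fun n => D ((u (φ n) : X))) atTop (𝓝 (D x)) :=
          (D.continuous.tendsto x).comp hx
        have h2 : Tendsto (fun n => D ((u (φ n) : X))) atTop (𝓝 0) := by
          simp only [hDz]; exact tendsto_const_nhds
        exact LinearMap.mem_ker.2 (tendsto_nhds_unique h1 h2)
      have hxnorm : ‖x‖ ≤ 1 := by
        refine le_of_tendsto (hx.norm) (Eventually.of_forall fun n => ?_)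
        have := hu (φ n)
        rwa [Metric.mem_closedBall, dist_zero_right] at this
      refine ⟨⟨x, hxker⟩, ?_, φ, hφ, ?_⟩
      · rw [Metric.mem_closedBall, dist_zero_right]; exact hxnorm
      · rw [tendsto_subtype_rng]; exact hx
    exact FiniteDimensional.of_isCompact_closedBall₀ ℝ one_pos hcomp
  · -- closed range via quotient by kernel
    set S := LinearMap.ker (D : X →ₗ[ℝ] Y) with hS
    -- lifted map on the quotient
    set Dl : (X ⧸ S) →ₗ[ℝ] Y := S.liftQ (D : X →ₗ[ℝ] Y) le_rfl with hDl
    have hDlmk : ∀ m : X, Dl (Submodule.Quotient.mk m) = D m := fun m => rfl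
    have hbound : ∀ q : X ⧸ S, ‖Dl q‖ ≤ (‖D‖ + 1) * ‖q‖ := by
      intro q
      refine le_of_forall_pos_le_add fun ε hε => ?_
      have hε' : 0 < ε / (‖D‖ + 1) := by positivity
      obtain ⟨m, rfl, hm⟩ := Submodule.Quotient.norm_mk_lt q hε'
      calc ‖Dl (Submodule.Quotient.mk m)‖ = ‖D m‖ := rfl
        _ ≤ ‖D‖ * ‖m‖ := D.le_opNorm m
        _ ≤ (‖D‖ + 1) * ‖m‖ := by
            apply mul_le_mul_of_nonneg_right (by linarith) (norm_nonneg m)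
        _ ≤ (‖D‖ + 1) * (‖(Submodule.Quotient.mk m : X ⧸ S)‖ + ε / (‖D‖ + 1)) := by
            apply mul_le_mul_of_nonneg_left hm.le (by positivity)
        _ = (‖D‖ + 1) * ‖(Submodule.Quotient.mk m : X ⧸ S)‖ + ε := by
            have hD1 : ‖D‖ + 1 ≠ 0 := by positivity
            field_simp
    set Dbar : (X ⧸ S) →L[ℝ] Y := Dl.mkContinuous (‖D‖ + 1) hbound with hDbar
    -- key uniform estimate on the quotient
    have key : ∃ C : ℝ, 0 < C ∧ ∀ q : X ⧸ S, ‖q‖ ≤ C * ‖Dbar q‖ := by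
      by_contra hcon
      push_neg at hcon
      have hex : ∀ n : ℕ, ∃ q : X ⧸ S, ((n : ℝ) + 1) * ‖Dbar q‖ < ‖q‖ := by
        intro n
        obtain ⟨q, hq⟩ := hcon ((n : ℝ) + 1) (by positivity)
        exact ⟨q, hq⟩
      choose q hq using hex
      have hqpos : ∀ n, 0 < ‖q n‖ := fun n =>
        lt_of_le_of_lt (by positivity) (hq n)
      have hrep : ∀ n : ℕ, ∃ m : X, Submodule.Quotient.mk m = q n ∧ ‖m‖ < ‖q n‖ + ‖q n‖ :=
        fun n => by
          obtain ⟨m, hm1, hm2⟩ := Submodule.Quotient.norm_mk_lt (q n) (hqpos n)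
          exact ⟨m, hm1, hm2⟩
      choose m hm1 hm2 using hrep
      set z : ℕ → X := fun n => (‖q n‖)⁻¹ • m n with hz
      have hz2 : ∀ n, ‖z n‖ ≤ 2 := by
        intro n
        rw [hz]
        simp only [norm_smul, norm_inv, norm_norm]
        rw [inv_mul_le_iff₀ (hqpos n)]
        linarith [hm2 n]
      have hDzval : ∀ n, D (z n) = (‖q n‖)⁻¹ • Dbar (q n) := by
        intro n
        rw [hz]
        simp only [map_smul]
        congr 1
        rw [← hm1 n]
        rfl
      have hDznorm : ∀ n, ‖D (z n)‖ < 1 / ((n : ℝ) + 1) := by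
        intro n
        rw [hDzval n]
        rw [norm_smul, norm_inv, norm_norm]
        rw [inv_mul_lt_iff₀ (hqpos n)]
        rw [mul_one_div, lt_div_iff₀ (by positivity : (0:ℝ) < (n:ℝ)+1)]
        calc ‖Dbar (q n)‖ * ((n : ℝ) + 1) = ((n : ℝ) + 1) * ‖Dbar (q n)‖ := mul_comm _ _
          _ < ‖q n‖ := hq n
      have hDz0 : Tendsto (fun n => D (z n)) atTop (𝓝 0) := by
        rw [tendsto_zero_iff_norm_tendsto_zero]
        apply squeeze_zero (fun n => norm_nonneg _) (fun n => (hDznorm n).le)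
        exact tendsto_one_div_add_atTop_nhds_zero_nat
      obtain ⟨φ, x, hφ, hx⟩ := stmt6_aux D K hK c hc h z hz2 hDz0.cauchySeq
      have hxker : x ∈ S := by
        have h1 : Tendsto (fun n => D (z (φ n))) atTop (𝓝 (D x)) :=
          (D.continuous.tendsto x).comp hx
        have h2 : Tendsto (fun n => D (z (φ n))) atTop (𝓝 0) :=
          hDz0.comp hφ.tendsto_atTop
        exact LinearMap.mem_ker.2 (tendsto_nhds_unique h1 h2)
      -- mk is 1-Lipschitz, hence continuous
      have hmklip : LipschitzWith 1 (fun x : X => (Submodule.Quotient.mk x : X ⧸ S)) := by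
        apply LipschitzWith.of_dist_le_mul
        intro a b
        rw [dist_eq_norm, dist_eq_norm, NNReal.coe_one, one_mul, ← Submodule.Quotient.mk_sub]
        exact Submodule.Quotient.norm_mk_le S (a - b)
      have hmk0 : (Submodule.Quotient.mk x : X ⧸ S) = 0 :=
        (Submodule.Quotient.mk_eq_zero S).2 hxker
      have hmklim : Tendsto (fun n => (Submodule.Quotient.mk (z (φ n)) : X ⧸ S)) atTop
          (𝓝 (Submodule.Quotient.mk x)) := (hmklip.continuous.tendsto x).comp hx
      have hmknorm : ∀ n, ‖(Submodule.Quotient.mk (z (φ n)) : X ⧸ S)‖ = 1 := by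
        intro n
        have : (Submodule.Quotient.mk (z (φ n)) : X ⧸ S) = (‖q (φ n)‖)⁻¹ • q (φ n) := by
          show (Submodule.Quotient.mk ((‖q (φ n)‖)⁻¹ • m (φ n)) : X ⧸ S) = _
          rw [Submodule.Quotient.mk_smul, hm1 (φ n)]
        rw [this, norm_smul, norm_inv, norm_norm, inv_mul_cancel₀ (hqpos (φ n)).ne']
      have h1 : Tendsto (fun n => ‖(Submodule.Quotient.mk (z (φ n)) : X ⧸ S)‖) atTop
          (𝓝 ‖(Submodule.Quotient.mk x : X ⧸ S)‖) := hmklim.norm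
      rw [hmk0, norm_zero] at h1
      have h2 : Tendsto (fun n => ‖(Submodule.Quotient.mk (z (φ n)) : X ⧸ S)‖) atTop (𝓝 1) := by
        simp only [hmknorm]; exact tendsto_const_nhds
      exact one_ne_zero (tendsto_nhds_unique h2 h1)
    obtain ⟨C, hC, hCb⟩ := key
    have hanti : AntilipschitzWith C.toNNReal Dbar := by
      apply AddMonoidHomClass.antilipschitz_of_bound
      intro q
      calc ‖q‖ ≤ C * ‖Dbar q‖ := hCb q
        _ = (C.toNNReal : ℝ) * ‖Dbar q‖ := by rw [Real.coe_toNNReal C hC.le]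
    have hclosed : IsClosed (Set.range Dbar) :=
      hanti.isClosed_range Dbar.uniformContinuous
    have hrange : (LinearMap.range (D : X →ₗ[ℝ] Y) : Set Y) = Set.range Dbar := by
      ext y
      simp only [SetLike.mem_coe, LinearMap.mem_range, Set.mem_range]
      constructor
      · rintro ⟨x, rfl⟩
        exact ⟨Submodule.Quotient.mk x, rfl⟩
      · rintro ⟨qq, rfl⟩
        obtain ⟨x, rfl⟩ := Submodule.Quotient.mk_surjective S qq
        exact ⟨x, rfl⟩
    rw [hrange]
    exact hclosed
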